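/- arXiv:0809.2408 — 3 statements merged into one kernel-verified Lean document; each statement's English description precedes it below -/
import Mathlib

section
/- Let G be a group containing an infinite normal cyclic subgroup C of finite index. Then the union K of all finite normal subgroups of G is a finite normal subgroup of G (in particular, G has a unique maximal finite normal subgroup). -/
theorem union_of_finite_normal_subgroups_finite (G : Type*) [Group G]
    (C : Subgroup G) (hC : C.Normal) (hcyc : ∃ c : G, C = Subgroup.zpowers c)
    (hinf : Infinite C) (hindex : C.FiniteIndex) :
    ∃ K : Subgroup G,
      (K : Set G) = {g : G | ∃ N : Subgroup G, N.Normal ∧ (N : Set G).Finite ∧ g ∈ N} ∧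
        K.Normal ∧ (K : Set G).Finite := by
  classical
  obtain ⟨c, rfl⟩ := hcyc
  have hordc : ¬ IsOfFinOrder c := by
    intro h
    haveI : Finite (Subgroup.zpowers c) := h.finite_zpowers
    exact not_finite (Subgroup.zpowers c)
  have hinj : Function.Injective fun n : ℤ => c ^ n :=
    injective_zpow_iff_not_isOfFinOrder.mpr hordc
  set S : Set G := {g : G | ∃ N : Subgroup G, N.Normal ∧ (N : Set G).Finite ∧ g ∈ N} with hS
  have hmul : ∀ a ∈ S, ∀ b ∈ S, a * b ∈ S := by
    rintro a ⟨N₁, h₁, f₁, m₁⟩ b ⟨N₂, h₂, f₂, m₂⟩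
    haveI := h₁; haveI := h₂
    refine ⟨N₁ ⊔ N₂, inferInstance, ?_,
      mul_mem (Subgroup.mem_sup_left m₁) (Subgroup.mem_sup_right m₂)⟩
    rw [Subgroup.mul_normal N₁ N₂]
    exact f₁.mul f₂
  have hinv : ∀ a ∈ S, a⁻¹ ∈ S := by
    rintro a ⟨N, h, f, m⟩
    exact ⟨N, h, f, inv_mem m⟩
  have hone : (1 : G) ∈ S := ⟨⊥, inferInstance, by simp, one_mem _⟩
  have key : ∀ g ∈ S, g ∈ Subgroup.zpowers c → g = 1 := by
    rintro g ⟨N, h, f, m⟩ ⟨k, rfl⟩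
    haveI : Finite N := f.to_subtype
    have hfo : IsOfFinOrder ((⟨c ^ k, m⟩ : N)) := isOfFinOrder_of_finite _
    have hfo' : IsOfFinOrder (c ^ k) := N.subtype.isOfFinOrder hfo
    obtain ⟨n, hn, hpow⟩ := hfo'.exists_pow_eq_one
    have heq : c ^ (k * (n : ℤ)) = c ^ (0 : ℤ) := by
      rw [zpow_mul, zpow_zero, zpow_natCast, hpow]
    have hk : k * (n : ℤ) = 0 := hinj heq
    rcases mul_eq_zero.mp hk with hk0 | hn0
    · simp [hk0]
    · exact absurd hn0 (by exact_mod_cast hn.ne')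
  have hfin : S.Finite := by
    rw [← Set.finite_coe_iff]
    have hqfin : Finite (G ⧸ Subgroup.zpowers c) := inferInstance
    refine Finite.of_injective (fun g : S => (QuotientGroup.mk g.1 : G ⧸ Subgroup.zpowers c)) ?_
    rintro ⟨a, ha⟩ ⟨b, hb⟩ hab
    have : a⁻¹ * b ∈ Subgroup.zpowers c := (QuotientGroup.eq).mp hab
    have h1 : a⁻¹ * b = 1 := key _ (hmul _ (hinv _ ha) _ hb) this
    exact Subtype.ext (by
      have := mul_eq_one_iff_eq_inv.mp h1
      simpa using congrArg (·⁻¹) this)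
  exact ⟨{ carrier := S
           one_mem' := hone
           mul_mem' := fun ha hb => hmul _ ha _ hb
           inv_mem' := fun ha => hinv _ ha }, rfl,
    ⟨by rintro g ⟨N, h, f, m⟩ x; exact ⟨N, h, f, h.conj_mem g m x⟩⟩, hfin⟩
end

section
/- Let G be a group and suppose φ ∈ Aut(G) has the form φ(g) = w g ε(g) w⁻¹ for some fixed w ∈ G and some function ε : G → E, where E is a finite normal subgroup of G. Then φ is a commensurating automorphism of G. -/
theorem commensurating_of_conjugation_by_finite_normal_twist (G : Type*) [Group G]
    (E : Subgroup G) (hE : E.Normal) (hfin : (E : Set G).Finite)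
    (φ : MulAut G) (w : G) (ε : G → G) (hε : ∀ g : G, ε g ∈ E)
    (hφ : ∀ g : G, φ g = w * (g * ε g) * w⁻¹) :
    ∀ g : G, ∃ (h : G) (m n : ℤ), m ≠ 0 ∧ n ≠ 0 ∧ (φ g) ^ n = h * g ^ m * h⁻¹ := by
  intro g
  haveI := hE
  set x := g * ε g with hx
  have hq : (QuotientGroup.mk x : G ⧸ E) = QuotientGroup.mk g := by
    rw [QuotientGroup.eq]
    have : x⁻¹ * g = (ε g)⁻¹ := by
      rw [hx]; group
    rw [this]
    exact E.inv_mem (hε g)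
  have hmem : ∀ n : ℤ, (x ^ n)⁻¹ * g ^ n ∈ E := by
    intro n
    rw [← QuotientGroup.eq]
    push_cast [QuotientGroup.mk_zpow]
    rw [hq]
  haveI : Finite (E : Set G) := hfin.to_subtype
  obtain ⟨k, l, hne, heq⟩ := Finite.exists_ne_map_eq_of_infinite
    (fun k : ℕ => (⟨(x ^ (k : ℤ))⁻¹ * g ^ (k : ℤ), hmem k⟩ : (E : Set G)))
  have h1 : (x ^ (k : ℤ))⁻¹ * g ^ (k : ℤ) = (x ^ (l : ℤ))⁻¹ * g ^ (l : ℤ) := by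
    exact Subtype.ext_iff.mp heq
  set n : ℤ := (l : ℤ) - (k : ℤ) with hn
  have hn0 : n ≠ 0 := by
    simp only [hn, sub_ne_zero]
    exact_mod_cast fun h' => hne (by exact_mod_cast h'.symm)
  have key : x ^ n = g ^ n := by
    have h2 : g ^ (l : ℤ) = x ^ (l : ℤ) * ((x ^ (k : ℤ))⁻¹ * g ^ (k : ℤ)) := by
      rw [h1]; group
    calc x ^ n = x ^ (l : ℤ) * (x ^ (k : ℤ))⁻¹ := by rw [hn]; group
    _ = g ^ (l : ℤ) * (g ^ (k : ℤ))⁻¹ := by rw [h2]; group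
    _ = g ^ n := by rw [hn]; group
  refine ⟨w, n, n, hn0, hn0, ?_⟩
  have hφg : φ g = w * x * w⁻¹ := hφ g
  rw [hφg]
  rw [conj_zpow, key]
end

section
/- Let H be a finitely generated group with trivial center. Then H embeds into Out(H * ℤ): the action of H on itself by conjugation together with the trivial action on ℤ induces an injective homomorphism H → Out(H * ℤ). -/
open Monoid Finsupp

namespace CentEmb

variable {H : Type*} [Group H]

abbrev Z := Multiplicative ℤ
abbrev K (H : Type*) [Group H] := Multiplicative (ℤ →₀ Additive H)

/-- shift automorphism of the base group of the lamplighter. -/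
def shiftAut (n : ℤ) : MulAut (K H) where
  toFun x := Multiplicative.ofAdd (equivMapDomain (Equiv.addRight n) x.toAdd)
  invFun x := Multiplicative.ofAdd (equivMapDomain (Equiv.addRight n).symm x.toAdd)
  left_inv x := by
    apply Multiplicative.toAdd.injective
    ext b; simp [equivMapDomain_apply]
  right_inv x := by
    apply Multiplicative.toAdd.injective
    ext b; simp [equivMapDomain_apply]
  map_mul' x y := by
    apply Multiplicative.toAdd.injective
    ext b; simp [equivMapDomain_apply, sub_eq_add_neg]

lemma shiftAut_apply (n : ℤ) (x : K H) (b : ℤ) :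
    (shiftAut n x).toAdd b = x.toAdd (b - n) := by
  simp [shiftAut, equivMapDomain_apply, sub_eq_add_neg]

def shiftHom : Z →* MulAut (K H) where
  toFun n := shiftAut n.toAdd
  map_one' := by
    ext x : 1
    apply Multiplicative.toAdd.injective
    ext b : 1
    simp [shiftAut_apply]
  map_mul' n m := by
    ext x : 1
    apply Multiplicative.toAdd.injective
    ext b : 1
    show (shiftAut (n.toAdd + m.toAdd) x).toAdd b = _
    rw [shiftAut_apply]
    show _ = (shiftAut n.toAdd (shiftAut m.toAdd x)).toAdd b
    rw [shiftAut_apply, shiftAut_apply, sub_sub]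

abbrev L (H : Type*) [Group H] := K H ⋊[(shiftHom : Z →* MulAut (K H))] Z

/-- `a ↦ single 0 a` as a monoid hom. -/
noncomputable def single0 : H →* K H where
  toFun a := Multiplicative.ofAdd (Finsupp.single 0 (Additive.ofMul a))
  map_one' := by simp
  map_mul' a b := by
    apply Multiplicative.toAdd.injective
    simp [Finsupp.single_add]

/-- The lamplighter quotient of the free product. -/
noncomputable def lamp : Coprod H Z →* L H :=
  Coprod.lift (SemidirectProduct.inl.comp single0) SemidirectProduct.inr

/-- Conjugation by `h` on the `H` factor, identity on `ℤ`. -/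
def conjHom (h : H) : Coprod H Z →* Coprod H Z :=
  Coprod.lift (Coprod.inl.comp (MulAut.conj h).toMonoidHom) Coprod.inr

lemma conjHom_inl (h a : H) : conjHom h (Coprod.inl a) = Coprod.inl (h * a * h⁻¹) := by
  simp [conjHom]

lemma conjHom_inr (h : H) (b : Z) : conjHom h (Coprod.inr b) = Coprod.inr b := by
  simp [conjHom]

lemma conjHom_comp (h h' : H) : (conjHom h).comp (conjHom h') = conjHom (h * h') := by
  apply Coprod.hom_ext
  · ext a
    simp [conjHom_inl, mul_assoc]
  · ext
    simp [conjHom_inr]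

lemma conjHom_one : conjHom (1 : H) = MonoidHom.id _ := by
  apply Coprod.hom_ext
  · ext a; simp [conjHom_inl]
  · ext; simp [conjHom_inr]

def conjAut (h : H) : MulAut (Coprod H Z) :=
  MonoidHom.toMulEquiv (conjHom h) (conjHom h⁻¹)
    (by rw [conjHom_comp, inv_mul_cancel, conjHom_one])
    (by rw [conjHom_comp, mul_inv_cancel, conjHom_one])

lemma conjAut_apply (h : H) (x : Coprod H Z) : conjAut h x = conjHom h x := rfl

def conjMap : H →* MulAut (Coprod H Z) where
  toFun := conjAut
  map_one' := by
    ext x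
    rw [conjAut_apply, conjHom_one]
    rfl
  map_mul' h h' := by
    ext x
    rw [MulAut.mul_apply, conjAut_apply, conjAut_apply, conjAut_apply, ← conjHom_comp]
    rfl

lemma shift_invariant_eq_zero (k : ℤ →₀ Additive H) (hk : ∀ b, k b = k (b - 1)) : k = 0 := by
  by_contra h
  have hne : k.support.Nonempty := Finsupp.support_nonempty_iff.2 h
  set c := k.support.max' hne with hc
  have hmem : c ∈ k.support := k.support.max'_mem hne
  have : k (c + 1) = k c := by simpa using hk (c + 1)
  have hmem' : c + 1 ∈ k.support := by
    rw [Finsupp.mem_support_iff, this]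
    exact Finsupp.mem_support_iff.1 hmem
  have := k.support.le_max' _ hmem'
  omega

end CentEmb

open CentEmb in
theorem centerless_embeds_in_out_of_free_product_with_Z
    (H : Type*) [Group H] [Group.FG H]
    (hcenter : Subgroup.center H = ⊥) :
    ∃ f : H →* MulAut (Coprod H (Multiplicative ℤ)),
      (∀ h a : H, f h (Coprod.inl a) = Coprod.inl (h * a * h⁻¹)) ∧
      (∀ (h : H) (b : Multiplicative ℤ), f h (Coprod.inr b) = Coprod.inr b) ∧
      (∀ h : H,
        f h ∈ (MulAut.conj : Coprod H (Multiplicative ℤ) →*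
          MulAut (Coprod H (Multiplicative ℤ))).range → h = 1) := by
  refine ⟨conjMap, fun h a => conjHom_inl h a, fun h b => conjHom_inr h b, ?_⟩
  rintro h ⟨g, hg⟩
  have hg' : ∀ x, g * x * g⁻¹ = conjHom h x := fun x => by
    have := congrFun (congrArg (DFunLike.coe) hg) x
    simp only [MulAut.conj_apply] at this
    exact this
  set φ := (lamp : Coprod H Z →* L H) with hφ
  set x := φ g with hx
  -- g commutes with the generator of ℤ
  have hcomm : g * Coprod.inr (Multiplicative.ofAdd (1 : ℤ)) =
      Coprod.inr (Multiplicative.ofAdd (1 : ℤ)) * g := by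
    have := hg' (Coprod.inr (Multiplicative.ofAdd (1 : ℤ)))
    rw [conjHom_inr] at this
    calc g * Coprod.inr (Multiplicative.ofAdd (1 : ℤ))
        = (g * Coprod.inr (Multiplicative.ofAdd (1 : ℤ)) * g⁻¹) * g := by group
      _ = Coprod.inr (Multiplicative.ofAdd (1 : ℤ)) * g := by rw [this]
  -- transfer to the lamplighter
  have hφinr : ∀ b : Z, φ (Coprod.inr b) = SemidirectProduct.inr b := fun b => by
    simp [hφ, lamp]
  have hφinl : ∀ a : H, φ (Coprod.inl a) = SemidirectProduct.inl (single0 a) := fun a => by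
    simp [hφ, lamp]
  have hcommL : x * SemidirectProduct.inr (Multiplicative.ofAdd (1 : ℤ)) =
      SemidirectProduct.inr (Multiplicative.ofAdd (1 : ℤ)) * x := by
    have := congrArg φ hcomm
    rw [map_mul, map_mul, hφinr] at this
    exact this
  -- hence the Finsupp part of x is shift-invariant, hence trivial
  have hleft : x.left = 1 := by
    have h1 := congrArg SemidirectProduct.left hcommL
    simp only [SemidirectProduct.mul_left, SemidirectProduct.left_inr,
      SemidirectProduct.right_inr, map_one, mul_one, one_mul] at h1
    -- h1 : x.left = shiftHom (ofAdd 1) x.left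
    apply Multiplicative.toAdd.injective
    show x.left.toAdd = (1 : K H).toAdd
    have : x.left.toAdd = 0 := by
      apply shift_invariant_eq_zero
      intro b
      conv_lhs => rw [h1]
      exact shiftAut_apply 1 x.left b
    simpa using this
  have hxinr : x = SemidirectProduct.inr x.right := by
    ext
    · simp [hleft]
    · simp
  -- now use the conjugation equation on inl a
  have key : ∀ a : H, shiftHom x.right (single0 a) = single0 (h * a * h⁻¹) := by
    intro a
    have := congrArg φ (hg' (Coprod.inl a))
    rw [conjHom_inl, map_mul, map_mul, map_inv, hφinl, hφinl] at this
    have hxr : φ g = SemidirectProduct.inr x.right := hxinr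
    rw [hxr, ← map_inv, ← SemidirectProduct.inl_aut] at this
    exact SemidirectProduct.inl_injective this
  set n : ℤ := x.right.toAdd with hn
  have key' : ∀ a : H, ∀ b : ℤ,
      (single0 a : K H).toAdd (b - n) = (single0 (h * a * h⁻¹) : K H).toAdd b := by
    intro a b
    have := congrArg Multiplicative.toAdd (key a)
    have h2 := congrFun (congrArg DFunLike.coe this) b
    rw [← h2]
    exact (shiftAut_apply n (single0 a) b).symm
  by_cases hn0 : n = 0
  · -- h is central
    have hcen : ∀ a : H, h * a * h⁻¹ = a := by
      intro a
      have := key' a 0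
      rw [hn0, sub_zero] at this
      have hsimp : ∀ c : H, (single0 c : K H).toAdd (0 : ℤ) = Additive.ofMul c := by
        intro c; simp [single0]
      rw [hsimp, hsimp] at this
      exact (Additive.ofMul.injective this).symm
    have : h ∈ Subgroup.center H := by
      rw [Subgroup.mem_center_iff]
      intro a
      have := hcen a
      calc a * h = (h * a * h⁻¹) * h := by rw [this]
        _ = h * a := by group
    rw [hcenter] at this
    simpa using this
  · -- H must be trivial at h
    have := key' h 0
    have hl : (single0 h : K H).toAdd (0 - n) = 0 := by
      show Finsupp.single (0 : ℤ) (Additive.ofMul h) (0 - n) = 0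
      exact Finsupp.single_eq_of_ne (by omega)
    rw [hl] at this
    have : (h * h * h⁻¹ : H) = 1 := by
      have h2 : Additive.ofMul (h * h * h⁻¹) = 0 := by
        have h3 : (single0 (h * h * h⁻¹) : K H).toAdd (0 : ℤ) = Additive.ofMul (h * h * h⁻¹) := by
          simp [single0]
        rw [← h3, ← this]
      simpa using h2
    have : h = 1 := by
      have := this
      group at this
      simpa using this
    exact this
end
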